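/- Let F_q be a finite field with q elements, K a field extension of F_q of degree m, 1 ≤ k < l ≤ m, and g ∈ K^l a vector whose entries are linearly independent over F_q, with Gabidulin code C_{k,g} ⊆ K^l. Fix an ordered F_q-basis b of K, let W = span_{F_q}{g_1,…,g_l}, and let d be the largest positive integer such that W is a vector space over the subfield F_{q^d} ⊆ K. Let f : F_q^{l×m} → F_q^{l×m} be of the form f(A) = L·A·M_α for some L ∈ GL_l(F_q) and α ∈ K^×, where M_α := ε_b(α·b). Then f(ε_b(C_{k,g})) = ε_b(C_{k,g}) if and only if there exists β ∈ F_{q^d}^× such that g·L^T = β·g. In particular, the set {A ↦ L·A·M_α : α ∈ K^×, and L ∈ GL_l(F_q) with g·L^T = β·g for some β ∈ F_{q^d}^×} is contained in the group of invertible F_q-linear rank-preserving maps fixing ε_b(C_{k,g}) setwise. -/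

import Mathlib

open Matrix
open scoped MatrixGroups

/-- Matrix expansion with respect to an ordered basis `b` of `K` over `F`. -/
noncomputable def expand {F K : Type*} [Field F] [Field K] [Algebra F K] {m l : ℕ}
    (b : Module.Basis (Fin m) F K) (x : Fin l → K) : Matrix (Fin l) (Fin m) F :=
  Matrix.of fun i j => b.repr (x i) j


set_option linter.unusedSectionVars false

section aux

open Polynomial

variable {F K : Type*} [Field F] [Fintype F] [Field K] [Fintype K] [Algebra F K]

lemma exists_qpow_hom (s : ℕ) :
    ∃ φ : K →+* K, ∀ x : K, φ x = x ^ Fintype.card F ^ s := by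
  obtain ⟨p, hc⟩ := CharP.exists F
  haveI : CharP F p := hc
  obtain ⟨n, hp, hq⟩ := FiniteField.card F p
  haveI : CharP K p := charP_of_injective_algebraMap (algebraMap F K).injective p
  haveI : ExpChar K p := .prime hp
  exact ⟨iterateFrobenius K p ((n : ℕ) * s), fun x => by
    rw [iterateFrobenius_def, hq, ← pow_mul]⟩

lemma algebraMap_pow_q (c : F) (s : ℕ) :
    (algebraMap F K c) ^ Fintype.card F ^ s = algebraMap F K c := by
  rw [← map_pow, FiniteField.pow_card_pow]

lemma sum_smul_pow_q {ι : Type*} (s : Finset ι) (t : ι → F) (x : ι → K) (e : ℕ) :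
    (∑ j ∈ s, t j • x j) ^ Fintype.card F ^ e
      = ∑ j ∈ s, t j • (x j ^ Fintype.card F ^ e) := by
  obtain ⟨φ, hφ⟩ := exists_qpow_hom (F := F) (K := K) e
  rw [← hφ, map_sum]
  refine Finset.sum_congr rfl fun j _ => ?_
  rw [Algebra.smul_def, _root_.map_mul, hφ, hφ, algebraMap_pow_q, ← Algebra.smul_def]

lemma moore_linearIndependent {l : ℕ} (g : Fin l → K) (hg : LinearIndependent F g) :
    LinearIndependent K
      (fun i : Fin l => (fun j => g j ^ Fintype.card F ^ (i : ℕ) : Fin l → K)) := by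
  classical
  have hq2 : 1 < Fintype.card F := Fintype.one_lt_card
  rw [Fintype.linearIndependent_iff]
  intro a ha
  by_contra hne
  push_neg at hne
  obtain ⟨i₀, hi₀⟩ := hne
  set q := Fintype.card F with hqdef
  set P : K[X] := ∑ i : Fin l, C (a i) * X ^ (q ^ (i : ℕ)) with hP
  have hcoeff : ∀ i₁ : Fin l, P.coeff (q ^ (i₁ : ℕ)) = a i₁ := by
    intro i₁
    rw [hP, finset_sum_coeff, Finset.sum_eq_single i₁]
    · simp [coeff_X_pow]
    · intro j _ hj
      rw [coeff_C_mul, coeff_X_pow, if_neg, mul_zero]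
      exact fun h => hj (Fin.ext (Nat.pow_right_injective hq2 h.symm))
    · simp
  have hP0 : P ≠ 0 := fun h => hi₀ (by rw [← hcoeff i₀, h, coeff_zero])
  have hdeg : P.natDegree ≤ q ^ (l - 1) := by
    apply natDegree_sum_le_of_forall_le
    intro i _
    refine (natDegree_C_mul_le _ _).trans ?_
    rw [natDegree_X_pow]
    exact Nat.pow_le_pow_right (le_of_lt hq2) (by omega)
  have hcoord : ∀ j, ∑ i : Fin l, a i * g j ^ q ^ (i : ℕ) = 0 := by
    intro j
    have := congrFun ha j
    simpa using this
  have hroot : ∀ w ∈ Submodule.span F (Set.range g), P.IsRoot w := by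
    intro w hw
    rw [Submodule.mem_span_range_iff_exists_fun] at hw
    obtain ⟨t, rfl⟩ := hw
    show P.eval _ = 0
    rw [hP]
    simp only [eval_finset_sum, eval_mul, eval_C, eval_pow, eval_X]
    calc ∑ i : Fin l, a i * (∑ j, t j • g j) ^ q ^ (i : ℕ)
        = ∑ i : Fin l, ∑ j, t j • (a i * g j ^ q ^ (i : ℕ)) := by
          refine Finset.sum_congr rfl fun i _ => ?_
          rw [sum_smul_pow_q, Finset.mul_sum]
          exact Finset.sum_congr rfl fun j _ => mul_smul_comm _ _ _
      _ = ∑ j, t j • ∑ i : Fin l, a i * g j ^ q ^ (i : ℕ) := by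
          rw [Finset.sum_comm]
          exact Finset.sum_congr rfl fun j _ => (Finset.smul_sum).symm
      _ = 0 := by simp [hcoord]
  haveI : Fintype (Submodule.span F (Set.range g)) := Fintype.ofFinite _
  have hcard : Fintype.card (Submodule.span F (Set.range g)) = q ^ l := by
    rw [Module.card_fintype (Module.Basis.span hg), Fintype.card_fin]
  have hsub : ((Submodule.span F (Set.range g) : Set K)).toFinset ⊆ P.roots.toFinset := by
    intro x hx
    rw [Set.mem_toFinset] at hx
    rw [Multiset.mem_toFinset, mem_roots hP0]
    exact hroot x hx
  have hle : q ^ l ≤ q ^ (l - 1) := by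
    calc q ^ l = ((Submodule.span F (Set.range g) : Set K)).toFinset.card := by
          rw [Set.toFinset_card]; exact hcard.symm
      _ ≤ P.roots.toFinset.card := Finset.card_le_card hsub
      _ ≤ Multiset.card P.roots := Multiset.toFinset_card_le _
      _ ≤ P.natDegree := P.card_roots'
      _ ≤ q ^ (l - 1) := hdeg
  have hl : 0 < l := i₀.pos
  exact absurd hle (not_le.mpr (Nat.pow_lt_pow_right hq2 (by omega)))

lemma stab_pow_eq {m d : ℕ} (hm : Module.finrank F K = m) (hm0 : 0 < m)
    (hd0 : 0 < d) (hdm : d ∣ m) (W : Submodule F K)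
    (hdW : ∀ β : K, β ^ Fintype.card F ^ d = β → ∀ w ∈ W, β * w ∈ W)
    (hdmax : ∀ d' : ℕ, 0 < d' → d' ∣ m →
      (∀ β : K, β ^ Fintype.card F ^ d' = β → ∀ w ∈ W, β * w ∈ W) → d' ≤ d)
    {β : K} (hβ : ∀ w ∈ W, β * w ∈ W) : β ^ Fintype.card F ^ d = β := by
  classical
  have hq2 : 1 < Fintype.card F := Fintype.one_lt_card
  set q := Fintype.card F with hqdef
  let E : Subalgebra F K :=
    { carrier := {x : K | ∀ w ∈ W, x * w ∈ W}
      mul_mem' := fun {x y} hx hy w hw => by rw [mul_assoc]; exact hx _ (hy _ hw)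
      add_mem' := fun {x y} hx hy w hw => by rw [add_mul]; exact W.add_mem (hx _ hw) (hy _ hw)
      algebraMap_mem' := fun c w hw => by
        rw [← Algebra.smul_def]; exact W.smul_mem c hw }
  have hmemE : ∀ x : K, x ∈ E ↔ ∀ w ∈ W, x * w ∈ W := fun x => Iff.rfl
  haveI : Finite E := Subtype.finite
  haveI fintE : Fintype E := Fintype.ofFinite E
  haveI : IsDomain E := by
    exact Function.Injective.isDomain (E.toSubring.subtype) (Subtype.coe_injective)
  letI : Field E := (Finite.isField_of_domain E).toField
  haveI : Module.Finite F E := Module.finite_iff_finite.mpr ‹Finite E›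
  set e := Module.finrank F E with hedef
  have he_pos : 0 < e := Module.finrank_pos
  have he_dvd : e ∣ m := ⟨Module.finrank E K, by
    rw [← hm, ← Module.finrank_mul_finrank F E K]⟩
  have hcardE : Fintype.card E = q ^ e := by
    rw [Module.card_fintype (Module.finBasis F E), Fintype.card_fin]
  have hEcard : (E : Set K).toFinset.card = q ^ e := by
    rw [Set.toFinset_card, ← hcardE]
    exact Fintype.card_congr (Equiv.refl _)
  have hEpow : ∀ x : K, x ∈ E → x ^ q ^ e = x := by
    intro x hx
    have h1 : (⟨x, hx⟩ : E) ^ q ^ e = ⟨x, hx⟩ := by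
      rw [← hcardE]; exact FiniteField.pow_card _
    have := congrArg (Subtype.val) h1
    simpa using this
  have hsol : ∀ x : K, x ^ q ^ e = x → x ∈ E := by
    intro x hx
    set Q : K[X] := X ^ q ^ e - X with hQ
    have h1 : 1 < q ^ e := Nat.one_lt_pow he_pos.ne' hq2
    have hQdeg : Q.natDegree = q ^ e := FiniteField.X_pow_card_sub_X_natDegree_eq K h1
    have hQ0 : Q ≠ 0 := FiniteField.X_pow_card_sub_X_ne_zero K h1
    have hEsub : (E : Set K).toFinset ⊆ Q.roots.toFinset := by
      intro y hy
      rw [Set.mem_toFinset] at hy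
      rw [Multiset.mem_toFinset, mem_roots hQ0]
      show Q.eval y = 0
      rw [hQ]
      simp [hEpow y hy]
    have hcards : Q.roots.toFinset.card ≤ q ^ e :=
      le_trans (Multiset.toFinset_card_le _) (le_trans Q.card_roots' hQdeg.le)
    have heq : (E : Set K).toFinset = Q.roots.toFinset :=
      Finset.eq_of_subset_of_card_le hEsub (by rw [hEcard]; exact hcards)
    have hxr : x ∈ Q.roots.toFinset := by
      rw [Multiset.mem_toFinset, mem_roots hQ0]
      show Q.eval x = 0
      rw [hQ]; simp [hx]
    rw [← heq, Set.mem_toFinset] at hxr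
    exact hxr
  have hed : e ≤ d := hdmax e he_pos he_dvd fun γ hγ w hw => hsol γ hγ w hw
  -- now d ≤ e
  set R : K[X] := X ^ q ^ d - X with hR
  have hmq : Fintype.card K = q ^ m := by
    rw [Module.card_fintype (Module.finBasis F K), Fintype.card_fin, hm]
  have h1d : 1 < q ^ d := Nat.one_lt_pow hd0.ne' hq2
  have h1m : 1 < q ^ m := Nat.one_lt_pow hm0.ne' hq2
  have hR0 : R ≠ 0 := FiniteField.X_pow_card_sub_X_ne_zero K h1d
  have hB0 : (X ^ q ^ m - X : K[X]) ≠ 0 := FiniteField.X_pow_card_sub_X_ne_zero K h1m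
  have hdvd : R ∣ (X ^ q ^ m - X : K[X]) := by
    have e1 : (X : K[X]) ^ q ^ d - X = X * (X ^ (q ^ d - 1) - 1) := by
      rw [mul_sub, mul_one, ← pow_succ', Nat.sub_add_cancel h1d.le]
    have e2 : (X : K[X]) ^ q ^ m - X = X * (X ^ (q ^ m - 1) - 1) := by
      rw [mul_sub, mul_one, ← pow_succ', Nat.sub_add_cancel h1m.le]
    have hnat : (q ^ d - 1) ∣ (q ^ m - 1) := by
      obtain ⟨t, rfl⟩ := hdm
      have := Nat.sub_dvd_pow_sub_pow (q ^ d) 1 t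
      rwa [one_pow, ← pow_mul] at this
    obtain ⟨t, ht⟩ := hnat
    have hdvd1 : ((X : K[X]) ^ (q ^ d - 1) - 1) ∣ (X ^ (q ^ m - 1) - 1) := by
      have h := sub_dvd_pow_sub_pow ((X : K[X]) ^ (q ^ d - 1)) 1 t
      rwa [one_pow, ← pow_mul, ← ht] at h
    rw [hR, e1, e2]
    exact mul_dvd_mul_left X hdvd1
  have hroots_big : ((X : K[X]) ^ q ^ m - X).roots = Finset.univ.val := by
    have h := FiniteField.roots_X_pow_card_sub_X K
    rwa [hmq] at h
  obtain ⟨S, hS⟩ := hdvd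
  have hS0 : S ≠ 0 := by
    rintro rfl
    rw [mul_zero] at hS
    exact hB0 hS
  have hsum : Multiset.card R.roots + Multiset.card S.roots = q ^ m := by
    have hmul : ((X : K[X]) ^ q ^ m - X).roots = R.roots + S.roots := by
      rw [hS, roots_mul (hS ▸ hB0)]
    have hc := congrArg Multiset.card hmul
    rw [hroots_big] at hc
    simp only [Multiset.card_add] at hc
    rw [← hc]
    show (Finset.univ.card : ℕ) = q ^ m
    rw [Finset.card_univ, hmq]
  have hRdeg : R.natDegree = q ^ d := FiniteField.X_pow_card_sub_X_natDegree_eq K h1d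
  have hBdeg : ((X : K[X]) ^ q ^ m - X).natDegree = q ^ m :=
    FiniteField.X_pow_card_sub_X_natDegree_eq K h1m
  have hdegs : R.natDegree + S.natDegree = q ^ m := by
    rw [← natDegree_mul hR0 hS0, ← hS, hBdeg]
  have hcardR : q ^ d ≤ Multiset.card R.roots := by
    have h1 : Multiset.card S.roots ≤ S.natDegree := S.card_roots'
    have h2 : Multiset.card R.roots ≤ R.natDegree := R.card_roots'
    omega
  have hnodupR : R.roots.Nodup := by
    have hle : R.roots ≤ ((X : K[X]) ^ q ^ m - X).roots :=
      Polynomial.roots.le_of_dvd hB0 ⟨S, hS⟩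
    rw [hroots_big] at hle
    exact Multiset.nodup_of_le hle Finset.univ.nodup
  have hRsubE : R.roots.toFinset ⊆ (E : Set K).toFinset := by
    intro x hx
    rw [Multiset.mem_toFinset, mem_roots hR0] at hx
    have hx2 : x ^ q ^ d = x := by
      have := hx
      rw [hR] at this
      simp only [IsRoot, eval_sub, eval_pow, eval_X, sub_eq_zero] at this
      exact this
    rw [Set.mem_toFinset]
    exact fun w hw => hdW x hx2 w hw
  have hqde : q ^ d ≤ q ^ e := by
    calc q ^ d ≤ Multiset.card R.roots := hcardR
      _ = R.roots.toFinset.card := (Multiset.toFinset_card_of_nodup hnodupR).symm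
      _ ≤ (E : Set K).toFinset.card := Finset.card_le_card hRsubE
      _ = q ^ e := hEcard
  have hde : d ≤ e := (Nat.pow_le_pow_iff_right hq2).mp hqde
  have hdeq : d = e := le_antisymm hde hed
  rw [hdeq]
  exact hEpow β hβ

lemma expand_mul_right {m l : ℕ} (b : Module.Basis (Fin m) F K) (α : K) (x : Fin l → K) :
    expand b x * expand b (fun i => α * b i) = expand b (α • x) := by
  ext i j
  have h1 : α * x i = ∑ t, b.repr (x i) t • (α * b t) := by
    conv_lhs => rw [← b.sum_repr (x i), Finset.mul_sum]
    exact Finset.sum_congr rfl fun t _ => mul_smul_comm _ _ _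
  have h2 : b.repr (α * x i) j = ∑ t, b.repr (x i) t * b.repr (α * b t) j := by
    rw [h1, map_sum]
    simp [Finsupp.finset_sum_apply]
  simp only [_root_.expand, Matrix.mul_apply, Matrix.of_apply, Pi.smul_apply, smul_eq_mul]
  rw [h2]

lemma expand_mul_left {m l : ℕ} (b : Module.Basis (Fin m) F K)
    (L : Matrix (Fin l) (Fin l) F) (x : Fin l → K) :
    L * expand b x = expand b ((L.map (algebraMap F K)) *ᵥ x) := by
  ext i j
  have h1 : ((L.map (algebraMap F K)) *ᵥ x) i = ∑ t, L i t • x t := by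
    simp [Matrix.mulVec, dotProduct, Algebra.smul_def]
  simp only [_root_.expand, Matrix.mul_apply, Matrix.of_apply]
  rw [h1, map_sum]
  simp [Finsupp.finset_sum_apply]

lemma expand_injective {m l : ℕ} (b : Module.Basis (Fin m) F K) :
    Function.Injective (expand (K := K) b : (Fin l → K) → Matrix (Fin l) (Fin m) F) := by
  intro x y h
  funext i
  apply b.repr.injective
  have h' : ∀ j, expand b x i j = expand b y i j := fun j => by rw [h]
  exact DFunLike.ext _ _ fun j => h' j

lemma expand_basis_eq_one {m : ℕ} (b : Module.Basis (Fin m) F K) :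
    expand b (fun i => b i) = (1 : Matrix (Fin m) (Fin m) F) := by
  ext i j
  simp [_root_.expand, Module.Basis.repr_self, Finsupp.single_apply, Matrix.one_apply]

set_option maxHeartbeats 1000000 in
lemma gabidulin_key {m k l : ℕ} (hm : Module.finrank F K = m)
    (hk : 1 ≤ k) (hkl : k < l) (hlm : l ≤ m)
    (g : Fin l → K) (hg : LinearIndependent F g)
    (C : Submodule K (Fin l → K))
    (hC : C = Submodule.span K
      (Set.range fun i : Fin k => fun j => g j ^ Fintype.card F ^ (i : ℕ)))
    (W : Submodule F K) (hW : W = Submodule.span F (Set.range g))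
    (d : ℕ) (hd0 : 0 < d) (hdm : d ∣ m)
    (hdW : ∀ β : K, β ^ Fintype.card F ^ d = β → ∀ w ∈ W, β * w ∈ W)
    (hdmax : ∀ d' : ℕ, 0 < d' → d' ∣ m →
      (∀ β : K, β ^ Fintype.card F ^ d' = β → ∀ w ∈ W, β * w ∈ W) → d' ≤ d)
    (M : Matrix (Fin l) (Fin l) F) (hM : IsUnit M) :
    ((fun x : Fin l → K => (M.map (algebraMap F K)) *ᵥ x) '' (C : Set (Fin l → K)) = C)
      ↔ ∃ β : K, β ≠ 0 ∧ β ^ Fintype.card F ^ d = β ∧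
          (M.map (algebraMap F K)) *ᵥ g = β • g := by
  classical
  set q := Fintype.card F with hqdef
  obtain ⟨U, rfl⟩ := hM
  set MK := (U : Matrix (Fin l) (Fin l) F).map (algebraMap F K) with hMK
  set NK := ((U⁻¹ : (Matrix (Fin l) (Fin l) F)ˣ) : Matrix (Fin l) (Fin l) F).map
    (algebraMap F K) with hNK
  have hMN : MK * NK = 1 := by
    rw [hMK, hNK, ← Matrix.map_mul, Units.mul_inv,
      Matrix.map_one _ (map_zero _) (map_one _)]
  have hNM : NK * MK = 1 := by
    rw [hMK, hNK, ← Matrix.map_mul, Units.inv_mul,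
      Matrix.map_one _ (map_zero _) (map_one _)]
  have hinj : Function.Injective (fun x : Fin l → K => MK *ᵥ x) := by
    intro x y h
    have h2 := congrArg (fun z => NK *ᵥ z) h
    simpa [Matrix.mulVec_mulVec, hNM, Matrix.one_mulVec] using h2
  have hVC : ∀ i : Fin k, (fun t : Fin l => g t ^ q ^ (i : ℕ)) ∈ C := fun i =>
    hC ▸ Submodule.subset_span ⟨i, rfl⟩
  have hgC : g ∈ C := by
    have h0 := hVC ⟨0, hk⟩
    simpa using h0
  have hmul_pow : ∀ s : ℕ,
      (fun t => (MK *ᵥ g) t ^ q ^ s) = MK *ᵥ (fun t => g t ^ q ^ s) := by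
    intro s
    obtain ⟨φ, hφ⟩ := exists_qpow_hom (F := F) (K := K) s
    funext t
    rw [← hφ]
    show φ (∑ r, MK t r * g r) = ∑ r, MK t r * g r ^ q ^ s
    rw [map_sum]
    refine Finset.sum_congr rfl fun r _ => ?_
    rw [_root_.map_mul, hφ, hφ, hMK]
    simp only [Matrix.map_apply]
    rw [algebraMap_pow_q]
  constructor
  · -- forward direction
    intro himg
    have hmem : ∀ x ∈ C, MK *ᵥ x ∈ C := by
      intro x hx
      have h7 : MK *ᵥ x ∈ (fun x => MK *ᵥ x) '' (C : Set (Fin l → K)) := ⟨x, hx, rfl⟩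
      rwa [himg] at h7
    set u := MK *ᵥ g with hu
    have huC : u ∈ C := hmem g hgC
    rw [hC, Submodule.mem_span_range_iff_exists_fun] at huC
    obtain ⟨c, hc⟩ := huC
    set v : Fin l → (Fin l → K) := fun i => fun t => g t ^ q ^ (i : ℕ) with hv
    have li := moore_linearIndependent g hg
    set κ : Fin l := ⟨k, hkl⟩ with hκ
    have hCle : C ≤ Submodule.span K (v '' {κ}ᶜ) := by
      rw [hC]
      apply Submodule.span_le.mpr
      rintro y ⟨i, rfl⟩
      refine Submodule.subset_span ⟨⟨(i : ℕ), lt_trans i.isLt hkl⟩, ?_, rfl⟩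
      simp only [Set.mem_compl_iff, Set.mem_singleton_iff]
      intro h
      have := congrArg Fin.val h
      simp only [hκ] at this
      omega
    have hzero : ∀ n : ℕ, ∀ i : Fin k, k - (i : ℕ) ≤ n → 0 < (i : ℕ) → c i = 0 := by
      intro n
      induction n with
      | zero => intro i hi hpos; exfalso; have := i.isLt; omega
      | succ n ih =>
        intro i hi hpos
        by_contra hci
        have hz : ∀ j : Fin k, (i : ℕ) < (j : ℕ) → c j = 0 := by
          intro j hj
          have := j.isLt
          exact ih j (by omega) (by omega)
        set s := k - (i : ℕ) with hs
        set S : Finset (Fin k) := Finset.univ.filter (fun j => (j : ℕ) ≤ (i : ℕ)) with hS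
        have hiS : i ∈ S := by simp [hS]
        have husum : u = ∑ j ∈ S, c j • (fun t : Fin l => g t ^ q ^ (j : ℕ)) := by
          rw [← hc]
          refine (Finset.sum_subset (Finset.subset_univ S) ?_).symm
          intro x _ hx
          have : ¬ (x : ℕ) ≤ (i : ℕ) := by simpa [hS] using hx
          rw [hz x (by omega), zero_smul]
        have hbound : ∀ j : Fin k, j ∈ S → (j : ℕ) + s < l := by
          intro j hj
          have : (j : ℕ) ≤ (i : ℕ) := by simpa [hS] using hj
          have := i.isLt
          omega
        obtain ⟨φ, hφ⟩ := exists_qpow_hom (F := F) (K := K) s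
        have hexp : (fun t => u t ^ q ^ s)
            = ∑ j ∈ S.attach, (c j.1 ^ q ^ s) • v ⟨(j.1 : ℕ) + s, hbound j.1 j.2⟩ := by
          funext t
          have h1 : u t = ∑ j ∈ S, c j * g t ^ q ^ (j : ℕ) := by
            have := congrFun husum t
            simpa using this
          calc u t ^ q ^ s = φ (u t) := (hφ _).symm
            _ = ∑ j ∈ S, φ (c j * g t ^ q ^ (j : ℕ)) := by rw [h1, map_sum]
            _ = ∑ j ∈ S, c j ^ q ^ s * g t ^ (q ^ ((j : ℕ) + s)) := by
                refine Finset.sum_congr rfl fun j _ => ?_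
                rw [_root_.map_mul, hφ, hφ, ← pow_mul, ← pow_add]
            _ = ∑ j ∈ S.attach, c j.1 ^ q ^ s * g t ^ (q ^ ((j.1 : ℕ) + s)) := by
                rw [Finset.sum_attach S (fun j => c j ^ q ^ s * g t ^ (q ^ ((j : ℕ) + s)))]
            _ = (∑ j ∈ S.attach, (c j.1 ^ q ^ s) • v ⟨(j.1 : ℕ) + s, hbound j.1 j.2⟩) t := by
                rw [Finset.sum_apply]
                exact Finset.sum_congr rfl fun j _ => rfl
        have hκval : (⟨(i : ℕ) + s, hbound i hiS⟩ : Fin l) = κ := by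
          apply Fin.ext
          simp only [hκ]
          omega
        set i' : {x // x ∈ S} := ⟨i, hiS⟩ with hi'
        have hsplit : (fun t => u t ^ q ^ s)
            = (c i ^ q ^ s) • v κ
              + ∑ j ∈ S.attach.erase i',
                  (c j.1 ^ q ^ s) • v ⟨(j.1 : ℕ) + s, hbound j.1 j.2⟩ := by
          rw [hexp, ← Finset.add_sum_erase _ _ (Finset.mem_attach S i')]
          congr 1
          rw [hκval]
        have hrest : ∑ j ∈ S.attach.erase i',
            (c j.1 ^ q ^ s) • v ⟨(j.1 : ℕ) + s, hbound j.1 j.2⟩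
            ∈ Submodule.span K (v '' {κ}ᶜ) := by
          refine Submodule.sum_mem _ fun j hj => Submodule.smul_mem _ _
            (Submodule.subset_span ⟨_, ?_, rfl⟩)
          have hj1 : j ≠ i' := (Finset.mem_erase.mp hj).1
          have hj2 : (j.1 : ℕ) ≤ (i : ℕ) := by
            have h8 := j.2
            simp only [hS, Finset.mem_filter] at h8
            exact h8.2
          have hj3 : (j.1 : ℕ) ≠ (i : ℕ) := fun h =>
            hj1 (Subtype.ext (Fin.ext h))
          simp only [Set.mem_compl_iff, Set.mem_singleton_iff]
          intro h
          have := congrArg Fin.val h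
          simp only [hκ] at this
          omega
        have hfrob_mem : (fun t => u t ^ q ^ s) ∈ C := by
          have heq : (fun t => u t ^ q ^ s) = MK *ᵥ (fun t => g t ^ q ^ s) := hmul_pow s
          rw [heq]
          exact hmem _ (hVC ⟨s, by omega⟩)
        have hκmem : (c i ^ q ^ s) • v κ ∈ Submodule.span K (v '' {κ}ᶜ) := by
          have h2 : (fun t => u t ^ q ^ s) ∈ Submodule.span K (v '' {κ}ᶜ) :=
            hCle hfrob_mem
          have h3 := Submodule.sub_mem _ h2 hrest
          rw [hsplit, add_sub_cancel_right] at h3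
          exact h3
        have hvκ : v κ ∈ Submodule.span K (v '' {κ}ᶜ) := by
          have hne : c i ^ q ^ s ≠ 0 := pow_ne_zero _ hci
          have h4 := Submodule.smul_mem _ (c i ^ q ^ s)⁻¹ hκmem
          rwa [smul_smul, inv_mul_cancel₀ hne, one_smul] at h4
        exact li.notMem_span_image (by simp : κ ∉ ({κ}ᶜ : Set (Fin l))) hvκ
    haveI : NeZero k := ⟨by omega⟩
    have hc0 : u = c 0 • g := by
      rw [← hc]
      have hsingle : ∑ i : Fin k, c i • (fun j : Fin l => g j ^ q ^ (i : ℕ))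
          = c 0 • (fun j : Fin l => g j ^ q ^ ((0 : Fin k) : ℕ)) := by
        refine Fintype.sum_eq_single 0 fun j hj => ?_
        have hjv : 0 < (j : ℕ) := by
          rcases Nat.eq_zero_or_pos (j : ℕ) with h | h
          · exact absurd (Fin.ext (h.trans (Fin.val_zero k).symm)) hj
          · exact h
        rw [hzero k j (by omega) hjv, zero_smul]
      rw [hsingle]
      congr 1
      funext t
      simp
    refine ⟨c 0, ?_, ?_, ?_⟩
    · intro h0
      have hu0 : u = 0 := by rw [hc0, h0, zero_smul]
      have hg0 : g = 0 := by
        apply hinj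
        show MK *ᵥ g = MK *ᵥ 0
        rw [Matrix.mulVec_zero, ← hu, hu0]
      have hne := hg.ne_zero ⟨0, by omega⟩
      rw [hg0] at hne
      exact hne rfl
    · apply stab_pow_eq hm (by omega) hd0 hdm W hdW hdmax
      have hgen : ∀ t, c 0 * g t ∈ W := by
        intro t
        have h5 : c 0 * g t = u t := by rw [hc0]; simp
        have h6 : u t = ∑ r, (U : Matrix (Fin l) (Fin l) F) t r • g r := by
          rw [hu]
          show ∑ r, MK t r * g r = _
          refine Finset.sum_congr rfl fun r _ => ?_
          rw [hMK]
          simp only [Matrix.map_apply]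
          rw [Algebra.smul_def]
        rw [h5, h6, hW]
        exact Submodule.sum_mem _ fun r _ =>
          Submodule.smul_mem _ _ (Submodule.subset_span ⟨r, rfl⟩)
      intro w hw
      rw [hW] at hw
      induction hw using Submodule.span_induction with
      | mem x hx =>
        obtain ⟨t, rfl⟩ := hx
        exact hgen t
      | zero => rw [mul_zero]; exact W.zero_mem
      | add x y _ _ hx hy => rw [mul_add]; exact W.add_mem hx hy
      | smul a x _ hx => rw [Algebra.mul_smul_comm]; exact W.smul_mem a hx
    · exact hc0
  · -- backward direction
    rintro ⟨β, hβ0, hβd, hβg⟩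
    set ψ : (Fin l → K) →ₗ[K] (Fin l → K) := Matrix.mulVecLin MK with hψ
    have hmapC : Submodule.map ψ C = C := by
      have hle : Submodule.map ψ C ≤ C := by
        conv_lhs => rw [hC]
        rw [Submodule.map_span, Submodule.span_le]
        rintro y ⟨_, ⟨i, rfl⟩, rfl⟩
        have heq : ψ (fun t : Fin l => g t ^ q ^ (i : ℕ))
            = (β ^ q ^ (i : ℕ)) • (fun t : Fin l => g t ^ q ^ (i : ℕ)) := by
          show MK *ᵥ (fun t : Fin l => g t ^ q ^ (i : ℕ)) = _
          rw [← hmul_pow, hβg]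
          funext t
          simp [mul_pow]
        rw [heq]
        exact Submodule.smul_mem _ _ (hVC i)
      refine Submodule.eq_of_le_of_finrank_le hle ?_
      let e : (Fin l → K) ≃ₗ[K] (Fin l → K) :=
        LinearEquiv.ofLinear ψ (Matrix.mulVecLin NK)
          (LinearMap.ext fun x => by
            simp [hψ, Matrix.mulVecLin_apply, Matrix.mulVec_mulVec, hMN,
              Matrix.one_mulVec])
          (LinearMap.ext fun x => by
            simp [hψ, Matrix.mulVecLin_apply, Matrix.mulVec_mulVec, hNM,
              Matrix.one_mulVec])
      have hfr := LinearEquiv.finrank_map_eq e C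
      have : Submodule.map (e : (Fin l → K) →ₗ[K] (Fin l → K)) C = Submodule.map ψ C := rfl
      rw [this] at hfr
      rw [hfr]
    have hset := congrArg (fun S : Submodule K (Fin l → K) => (S : Set (Fin l → K))) hmapC
    simp only [Submodule.map_coe] at hset
    have hcoe : ⇑ψ = fun x : Fin l → K => MK *ᵥ x := by
      funext x
      simp [hψ]
    rw [hcoe] at hset
    exact hset

end aux

set_option maxHeartbeats 1000000 in
/-- **Matrix automorphisms of an expanded Gabidulin code of the form `A ↦ L A M_α`.**
With `C = C_{k,g}` the Gabidulin code of a Gabidulin vector `g`, `W = span_F {g_i}`, and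
`d` the largest positive integer such that `W` is an `F_{q^d}`-vector space, a map
`f(A) = L * A * M_α` (`L ∈ GL_l(F)`, `α ∈ K^×`, `M_α = ε_b(α • b)`) fixes `ε_b(C)`
setwise if and only if `g · Lᵀ = β • g` for some `β ∈ F_{q^d}^×`.  In particular every
such map is an invertible `F`-linear rank-preserving map fixing `ε_b(C)` setwise. -/
theorem gabidulin_matrix_automorphisms
    {F K : Type*} [Field F] [Fintype F] [Field K] [Fintype K] [Algebra F K]
    {m k l : ℕ} (hm : Module.finrank F K = m)
    (hk : 1 ≤ k) (hkl : k < l) (hlm : l ≤ m)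
    (g : Fin l → K) (hg : LinearIndependent F g)
    (C : Submodule K (Fin l → K))
    (hC : C = Submodule.span K
      (Set.range fun i : Fin k => fun j => g j ^ Fintype.card F ^ (i : ℕ)))
    (W : Submodule F K) (hW : W = Submodule.span F (Set.range g))
    (d : ℕ) (hd0 : 0 < d) (hdm : d ∣ m)
    (hdW : ∀ β : K, β ^ Fintype.card F ^ d = β → ∀ w ∈ W, β * w ∈ W)
    (hdmax : ∀ d' : ℕ, 0 < d' → d' ∣ m →
      (∀ β : K, β ^ Fintype.card F ^ d' = β → ∀ w ∈ W, β * w ∈ W) → d' ≤ d)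
    (b : Module.Basis (Fin m) F K) :
    (∀ (α : Kˣ) (L : GL (Fin l) F),
      ((fun A => (L : Matrix (Fin l) (Fin l) F) * A * expand b (fun i => (α : K) * b i)) ''
          (expand b '' (C : Set (Fin l → K))) = expand b '' (C : Set (Fin l → K)))
        ↔ ∃ β : K, β ≠ 0 ∧ β ^ Fintype.card F ^ d = β ∧
            Matrix.vecMul g ((L : Matrix (Fin l) (Fin l) F)ᵀ.map (algebraMap F K)) = β • g) ∧
    (∀ (α : Kˣ) (L : GL (Fin l) F),
      (∃ β : K, β ≠ 0 ∧ β ^ Fintype.card F ^ d = β ∧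
          Matrix.vecMul g ((L : Matrix (Fin l) (Fin l) F)ᵀ.map (algebraMap F K)) = β • g) →
        Function.Bijective
            (fun A : Matrix (Fin l) (Fin m) F =>
              (L : Matrix (Fin l) (Fin l) F) * A * expand b (fun i => (α : K) * b i)) ∧
          (∀ A : Matrix (Fin l) (Fin m) F,
            ((L : Matrix (Fin l) (Fin l) F) * A * expand b (fun i => (α : K) * b i)).rank
              = A.rank) ∧
          (fun A => (L : Matrix (Fin l) (Fin l) F) * A * expand b (fun i => (α : K) * b i)) ''
              (expand b '' (C : Set (Fin l → K))) = expand b '' (C : Set (Fin l → K))) := by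
  classical
  have hMprod : ∀ γ δ : K,
      expand b (fun i => γ * b i) * expand b (fun i => δ * b i)
        = expand b (fun i => (δ * γ) * b i) := by
    intro γ δ
    rw [expand_mul_right]
    have h2 : δ • (fun i : Fin m => γ * b i) = fun i => (δ * γ) * b i := by
      funext i
      simp [smul_eq_mul, mul_assoc]
    rw [h2]
  have hMα : ∀ α : Kˣ,
      expand b (fun i => (α : K) * b i) * expand b (fun i => ((α⁻¹ : Kˣ) : K) * b i)
        = 1 := by
    intro α
    rw [hMprod]
    have h1 : (fun i : Fin m => (((α⁻¹ : Kˣ) : K) * (α : K)) * b i) = fun i => b i := by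
      funext i
      rw [Units.inv_mul, one_mul]
    rw [h1, expand_basis_eq_one]
  have hMα' : ∀ α : Kˣ,
      expand b (fun i => ((α⁻¹ : Kˣ) : K) * b i) * expand b (fun i => (α : K) * b i)
        = 1 := by
    intro α
    rw [hMprod]
    have h1 : (fun i : Fin m => ((α : K) * ((α⁻¹ : Kˣ) : K)) * b i) = fun i => b i := by
      funext i
      rw [Units.mul_inv, one_mul]
    rw [h1, expand_basis_eq_one]
  have main : ∀ (α : Kˣ) (L : GL (Fin l) F),
      ((fun A => (L : Matrix (Fin l) (Fin l) F) * A * expand b (fun i => (α : K) * b i)) ''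
          (expand b '' (C : Set (Fin l → K))) = expand b '' (C : Set (Fin l → K)))
        ↔ ∃ β : K, β ≠ 0 ∧ β ^ Fintype.card F ^ d = β ∧
            Matrix.vecMul g ((L : Matrix (Fin l) (Fin l) F)ᵀ.map (algebraMap F K)) = β • g := by
    intro α L
    have hL : IsUnit (L : Matrix (Fin l) (Fin l) F) := ⟨L, rfl⟩
    set LK := (L : Matrix (Fin l) (Fin l) F).map (algebraMap F K) with hLK
    have hvm : Matrix.vecMul g (((L : Matrix (Fin l) (Fin l) F))ᵀ.map (algebraMap F K))
        = LK *ᵥ g := by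
      rw [Matrix.transpose_map, Matrix.vecMul_transpose]
    rw [hvm]
    have hfun : (fun A => (L : Matrix (Fin l) (Fin l) F) * A
          * expand b (fun i => (α : K) * b i)) ∘ (expand b)
        = (expand b) ∘ (fun x : Fin l → K => (α : K) • (LK *ᵥ x)) := by
      funext x
      show (L : Matrix (Fin l) (Fin l) F) * expand b x * expand b (fun i => (α : K) * b i)
        = expand b ((α : K) • (LK *ᵥ x))
      rw [expand_mul_left, expand_mul_right]
    have himg1 : (fun A => (L : Matrix (Fin l) (Fin l) F) * A
          * expand b (fun i => (α : K) * b i)) '' (expand b '' (C : Set (Fin l → K)))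
        = expand b '' ((fun x : Fin l → K => (α : K) • (LK *ᵥ x)) '' C) := by
      rw [← Set.image_comp, hfun, Set.image_comp]
    rw [himg1, Set.image_eq_image (expand_injective b)]
    have hsmulC : ∀ γ : Kˣ, (fun y : Fin l → K => (γ : K) • y) '' (C : Set (Fin l → K)) = C := by
      intro γ
      ext y
      constructor
      · rintro ⟨z, hz, rfl⟩
        exact C.smul_mem _ hz
      · intro hy
        exact ⟨((γ⁻¹ : Kˣ) : K) • y, C.smul_mem _ hy, by
          simp [smul_smul, Units.mul_inv]⟩
    have hcomp2 : (fun x : Fin l → K => (α : K) • (LK *ᵥ x)) '' (C : Set (Fin l → K))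
        = (fun y : Fin l → K => (α : K) • y) '' ((fun x : Fin l → K => LK *ᵥ x) '' C) := by
      rw [← Set.image_comp]
      rfl
    rw [hcomp2]
    have hsmulinj : Function.Injective (fun y : Fin l → K => (α : K) • y) :=
      smul_right_injective _ (Units.ne_zero α)
    constructor
    · intro h
      have h1 : (fun y : Fin l → K => (α : K) • y) '' ((fun x : Fin l → K => LK *ᵥ x) '' C)
          = (fun y : Fin l → K => (α : K) • y) '' C := by
        rw [h, hsmulC α]
      have h2 := (Set.image_eq_image hsmulinj).mp h1
      exact (gabidulin_key hm hk hkl hlm g hg C hC W hW d hd0 hdm hdW hdmax _ hL).mp h2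
    · intro hβ
      have h2 := (gabidulin_key hm hk hkl hlm g hg C hC W hW d hd0 hdm hdW hdmax _ hL).mpr hβ
      rw [h2, hsmulC α]
  refine ⟨main, ?_⟩
  intro α L hβ
  have hL : IsUnit (L : Matrix (Fin l) (Fin l) F) := ⟨L, rfl⟩
  have hLdet : IsUnit (L : Matrix (Fin l) (Fin l) F).det :=
    (Matrix.isUnit_iff_isUnit_det _).mp hL
  have hMαunit : IsUnit (expand b (fun i => (α : K) * b i)) :=
    ⟨⟨expand b (fun i => (α : K) * b i), expand b (fun i => ((α⁻¹ : Kˣ) : K) * b i),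
      hMα α, hMα' α⟩, rfl⟩
  have hMαdet : IsUnit (expand b (fun i => (α : K) * b i)).det :=
    (Matrix.isUnit_iff_isUnit_det _).mp hMαunit
  have hLL : ((L⁻¹ : GL (Fin l) F) : Matrix (Fin l) (Fin l) F)
      * (L : Matrix (Fin l) (Fin l) F) = 1 := Units.inv_mul L
  have hLL' : (L : Matrix (Fin l) (Fin l) F)
      * ((L⁻¹ : GL (Fin l) F) : Matrix (Fin l) (Fin l) F) = 1 := Units.mul_inv L
  refine ⟨?_, ?_, (main α L).mpr hβ⟩
  · refine Function.bijective_iff_has_inverse.mpr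
      ⟨fun A => ((L⁻¹ : GL (Fin l) F) : Matrix (Fin l) (Fin l) F) * A
        * expand b (fun i => ((α⁻¹ : Kˣ) : K) * b i), ?_, ?_⟩
    · intro A
      show ((L⁻¹ : GL (Fin l) F) : Matrix (Fin l) (Fin l) F)
          * ((L : Matrix (Fin l) (Fin l) F) * A * expand b (fun i => (α : K) * b i))
          * expand b (fun i => ((α⁻¹ : Kˣ) : K) * b i) = A
      calc ((L⁻¹ : GL (Fin l) F) : Matrix (Fin l) (Fin l) F)
          * ((L : Matrix (Fin l) (Fin l) F) * A * expand b (fun i => (α : K) * b i))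
          * expand b (fun i => ((α⁻¹ : Kˣ) : K) * b i)
          = (((L⁻¹ : GL (Fin l) F) : Matrix (Fin l) (Fin l) F)
            * (L : Matrix (Fin l) (Fin l) F)) * A
            * (expand b (fun i => (α : K) * b i)
              * expand b (fun i => ((α⁻¹ : Kˣ) : K) * b i)) := by
            simp only [Matrix.mul_assoc]
        _ = A := by rw [hLL, hMα α, Matrix.one_mul, Matrix.mul_one]
    · intro A
      show (L : Matrix (Fin l) (Fin l) F)
          * (((L⁻¹ : GL (Fin l) F) : Matrix (Fin l) (Fin l) F) * A
            * expand b (fun i => ((α⁻¹ : Kˣ) : K) * b i))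
          * expand b (fun i => (α : K) * b i) = A
      calc (L : Matrix (Fin l) (Fin l) F)
          * (((L⁻¹ : GL (Fin l) F) : Matrix (Fin l) (Fin l) F) * A
            * expand b (fun i => ((α⁻¹ : Kˣ) : K) * b i))
          * expand b (fun i => (α : K) * b i)
          = ((L : Matrix (Fin l) (Fin l) F)
            * ((L⁻¹ : GL (Fin l) F) : Matrix (Fin l) (Fin l) F)) * A
            * (expand b (fun i => ((α⁻¹ : Kˣ) : K) * b i)
              * expand b (fun i => (α : K) * b i)) := by
            simp only [Matrix.mul_assoc]
        _ = A := by rw [hLL', hMα' α, Matrix.one_mul, Matrix.mul_one]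
  · intro A
    rw [Matrix.rank_mul_eq_left_of_isUnit_det _ _ hMαdet,
      Matrix.rank_mul_eq_right_of_isUnit_det _ _ hLdet]
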